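/- Let G be a maximal k-degenerate finite simple graph with at least k+2 vertices. Then no two vertices of degree exactly k in G are adjacent. -/

import Mathlib

set_option linter.unusedSectionVars false

section aux
variable {V : Type*} [Fintype V]

lemma ncard_lt_lemma' {n m : ℕ} (h : m ≤ n) (φ : V ≃ Fin n) :
    {x : V | (φ x : ℕ) < m}.ncard = m := by
  have e : {x : V | (φ x : ℕ) < m} ≃ {i : Fin n // (i : ℕ) < m} :=
    φ.subtypeEquiv (fun a => Iff.rfl)
  have e2 : {i : Fin n // (i : ℕ) < m} ≃ Fin m :=
    { toFun := fun i => ⟨i.1, i.2⟩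
      invFun := fun j => ⟨⟨j, lt_of_lt_of_le j.2 h⟩, j.2⟩
      left_inv := fun i => rfl
      right_inv := fun j => rfl }
  rw [← Nat.card_coe_set_eq, Nat.card_congr (e.trans e2), Nat.card_eq_fintype_card,
    Fintype.card_fin]

lemma aux_main (k : ℕ) (G : SimpleGraph V)
    (φ : V ≃ Fin (Fintype.card V))
    (hφ : ∀ v : V, ({u | G.Adj v u ∧ (φ u : ℕ) < (φ v : ℕ)}).ncard = min k (φ v : ℕ))
    (hcard : k + 2 ≤ Fintype.card V)
    (u v : V) (huv : G.Adj u v) (hlt : (φ u : ℕ) < (φ v : ℕ))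
    (hu : (G.neighborSet u).ncard = k) (hv : (G.neighborSet v).ncard = k) :
    False := by
  have hne : ∀ x z : V, G.Adj z x → (φ x : ℕ) ≠ (φ z : ℕ) := by
    intro x z h hxz
    exact h.ne' (φ.injective (Fin.val_injective hxz))
  -- splitting the neighbor set into back and forward neighbors
  have hsplit : ∀ z : V, (G.neighborSet z).ncard =
      ({x | G.Adj z x ∧ (φ x : ℕ) < (φ z : ℕ)}).ncard +
      ({x | G.Adj z x ∧ (φ z : ℕ) < (φ x : ℕ)}).ncard := by
    intro z
    have hU : G.neighborSet z =
        {x | G.Adj z x ∧ (φ x : ℕ) < (φ z : ℕ)} ∪ {x | G.Adj z x ∧ (φ z : ℕ) < (φ x : ℕ)} := by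
      ext x
      simp only [SimpleGraph.mem_neighborSet, Set.mem_union, Set.mem_setOf_eq]
      constructor
      · intro h
        rcases lt_or_gt_of_ne (hne x z h) with h' | h'
        · exact Or.inl ⟨h, h'⟩
        · exact Or.inr ⟨h, h'⟩
      · rintro (⟨h, _⟩ | ⟨h, _⟩) <;> exact h
    rw [hU, Set.ncard_union_eq ?_ (Set.toFinite _) (Set.toFinite _)]
    rw [Set.disjoint_left]
    rintro x ⟨_, h1⟩ ⟨_, h2⟩
    omega
  -- every vertex with index ≤ k is adjacent to all earlier vertices
  have hadj : ∀ x y : V, (φ x : ℕ) ≤ k → (φ y : ℕ) < (φ x : ℕ) → G.Adj x y := by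
    intro x y hx hy
    have hB : ({z | G.Adj x z ∧ (φ z : ℕ) < (φ x : ℕ)}).ncard = (φ x : ℕ) := by
      rw [hφ]; omega
    have hL : ({z : V | (φ z : ℕ) < (φ x : ℕ)}).ncard = (φ x : ℕ) :=
      ncard_lt_lemma' (φ x).isLt.le φ
    have hsub : {z | G.Adj x z ∧ (φ z : ℕ) < (φ x : ℕ)} ⊆ {z : V | (φ z : ℕ) < (φ x : ℕ)} :=
      fun z hz => hz.2
    have heq := Set.eq_of_subset_of_ncard_le hsub (by rw [hB, hL]) (Set.toFinite _)
    have : y ∈ {z | G.Adj x z ∧ (φ z : ℕ) < (φ x : ℕ)} := by rw [heq]; exact hy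
    exact this.1
  -- degree-k vertices with index ≤ k have neighbor set equal to the initial clique minus self
  have hnbhd : ∀ z : V, (φ z : ℕ) ≤ k → (G.neighborSet z).ncard = k →
      G.neighborSet z = {x : V | (φ x : ℕ) ≤ k ∧ x ≠ z} := by
    intro z hz hdeg
    have hsub : {x : V | (φ x : ℕ) ≤ k ∧ x ≠ z} ⊆ G.neighborSet z := by
      rintro x ⟨hx, hxz⟩
      have : (φ x : ℕ) ≠ (φ z : ℕ) := fun h => hxz (φ.injective (Fin.val_injective h))
      rcases lt_or_gt_of_ne this with h | h
      · exact hadj z x hz h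
      · exact (hadj x z hx h).symm
    have hS : ({x : V | (φ x : ℕ) ≤ k}).ncard = k + 1 := by
      have : {x : V | (φ x : ℕ) ≤ k} = {x : V | (φ x : ℕ) < k + 1} := by
        ext x; simp
      rw [this, ncard_lt_lemma' (by omega) φ]
    have hzS : z ∈ {x : V | (φ x : ℕ) ≤ k} := hz
    have hR : ({x : V | (φ x : ℕ) ≤ k ∧ x ≠ z}).ncard = k := by
      have : {x : V | (φ x : ℕ) ≤ k ∧ x ≠ z} = {x : V | (φ x : ℕ) ≤ k} \ {z} := by
        ext x; simp [Set.mem_diff, and_comm]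
      rw [this, Set.ncard_diff_singleton_of_mem hzS, hS]
      omega
    exact (Set.eq_of_subset_of_ncard_le hsub (by rw [hdeg, hR]) (Set.toFinite _)).symm
  -- u has index < k
  have hu_lt : (φ u : ℕ) < k := by
    by_contra h
    push_neg at h
    have hb : ({x | G.Adj u x ∧ (φ x : ℕ) < (φ u : ℕ)}).ncard = k := by rw [hφ]; omega
    have hf : ({x | G.Adj u x ∧ (φ u : ℕ) < (φ x : ℕ)}).ncard = 0 := by
      have := hsplit u
      omega
    have : v ∈ {x | G.Adj u x ∧ (φ u : ℕ) < (φ x : ℕ)} := ⟨huv, hlt⟩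
    rw [(Set.ncard_eq_zero (Set.toFinite _)).mp hf] at this
    exact this
  have hNu := hnbhd u hu_lt.le hu
  have hφv : (φ v : ℕ) ≤ k := by
    have : v ∈ G.neighborSet u := huv
    rw [hNu] at this
    exact this.1
  have hNv := hnbhd v hφv hv
  -- the vertex with index k+1
  have hk1 : k + 1 < Fintype.card V := by omega
  set w : V := φ.symm ⟨k + 1, hk1⟩ with hw
  have hφw : (φ w : ℕ) = k + 1 := by rw [hw, Equiv.apply_symm_apply]
  have hbw : ({x | G.Adj w x ∧ (φ x : ℕ) < (φ w : ℕ)}).ncard = k := by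
    rw [hφ, hφw]; omega
  have hwu : ¬ G.Adj w u := by
    intro h
    have : w ∈ G.neighborSet u := h.symm
    rw [hNu] at this
    obtain ⟨h1, -⟩ := this
    omega
  have hwv : ¬ G.Adj w v := by
    intro h
    have : w ∈ G.neighborSet v := h.symm
    rw [hNv] at this
    obtain ⟨h1, -⟩ := this
    omega
  have hsub : {x | G.Adj w x ∧ (φ x : ℕ) < (φ w : ℕ)} ⊆
      {x : V | (φ x : ℕ) ≤ k} \ {u, v} := by
    rintro x ⟨hx1, hx2⟩
    refine ⟨by simp only [Set.mem_setOf_eq]; omega, ?_⟩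
    rintro (rfl | rfl)
    · exact hwu hx1
    · exact hwv hx1
  have hS : ({x : V | (φ x : ℕ) ≤ k}).ncard = k + 1 := by
    have : {x : V | (φ x : ℕ) ≤ k} = {x : V | (φ x : ℕ) < k + 1} := by
      ext x; simp
    rw [this, ncard_lt_lemma' (by omega) φ]
  have huvsub : ({u, v} : Set V) ⊆ {x : V | (φ x : ℕ) ≤ k} := by
    rintro x (rfl | rfl)
    · exact hu_lt.le
    · exact hφv
  have hdiff : ({x : V | (φ x : ℕ) ≤ k} \ {u, v}).ncard = k - 1 := by
    rw [Set.ncard_diff huvsub (Set.toFinite _), hS, Set.ncard_pair huv.ne]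
    omega
  have hle := Set.ncard_le_ncard hsub (Set.toFinite _)
  rw [hbw, hdiff] at hle
  omega

end aux

/-- A graph is maximal `k`-degenerate iff it admits an elimination ordering in which
every vertex `v` has exactly `min k (φ v)` neighbors preceding it (0-indexed). -/
def MaxKDegenerate {V : Type*} [Fintype V] (G : SimpleGraph V) (k : ℕ) : Prop :=
  ∃ φ : V ≃ Fin (Fintype.card V),
    ∀ v : V, ({u | G.Adj v u ∧ (φ u : ℕ) < (φ v : ℕ)}).ncard = min k (φ v : ℕ)

/-- No two adjacent vertices of degree exactly `k` in a maximal `k`-degenerate graph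
with at least `k+2` vertices. -/
theorem stmt7 {V : Type*} [Fintype V] (k : ℕ) (G : SimpleGraph V)
    (hG : MaxKDegenerate G k) (hcard : k + 2 ≤ Fintype.card V)
    (u v : V) (huv : G.Adj u v)
    (hu : (G.neighborSet u).ncard = k) (hv : (G.neighborSet v).ncard = k) :
    False := by
  obtain ⟨φ, hφ⟩ := hG
  rcases lt_trichotomy ((φ u : ℕ)) ((φ v : ℕ)) with h | h | h
  · exact aux_main k G φ hφ hcard u v huv h hu hv
  · exact huv.ne (φ.injective (Fin.val_injective h))
  · exact aux_main k G φ hφ hcard v u huv.symm h hv hu
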